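/- Let G = (V, E, R, c) be a relational hypergraph with |V| = n, maximum edge arity m, and L ≥ 0. Then there exist a family of feature maps h^(ℓ) : V → R^{nm} (0 ≤ ℓ ≤ L), matrices W^(ℓ) and, for each relation r ∈ R, matrices W_r^(ℓ), Y_r^(ℓ) (0 ≤ ℓ < L), and positional encoding vectors p_1, …, p_m ∈ R^{nm}, such that: (i) h^(ℓ) ≡ hrwl_1^(ℓ) for all 0 ≤ ℓ ≤ L; (ii) every h_v^(ℓ) is a column of the matrix Fts; and (iii) for all 0 ≤ ℓ < L and v ∈ V, h_v^(ℓ+1) = sign(W^(ℓ) [h_v^(ℓ) ∥ Σ_{(e,i) ∈ E(v)} Y_{ρ(e)}^(ℓ) sign(W_{ρ(e)}^(ℓ) (⊙_{j ≠ i} (h_{e(j)}^(ℓ) + p_j)) − 1)] − 1), where ∥ is vector concatenation, ⊙ is componentwise product, sign is applied entrywise, and subtracting 1 means subtracting the all-ones vector. -/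

import Mathlib

/-- A relational hypergraph over node set `V`, relation types `R` with arities `ar`.
A hyperedge (fact) `r(u₁,…,u_k)` is a pair of a relation type `r` and the tuple of
its nodes, of length `k = ar r`. -/
structure RelHG (V R : Type) (ar : R → ℕ) where
  edges : Finset (Σ r : R, Fin (ar r) → V)

variable {V R D : Type} {ar : R → ℕ}

/-- `E(v)`: the set of edge–position pairs `(e, i)` with `e(i) = v`. -/
def RelHG.incid [DecidableEq V] (H : RelHG V R ar) (v : V) :
    Finset (Σ e : Σ r : R, Fin (ar r) → V, Fin (ar e.1)) :=
  (H.edges.sigma fun e => (Finset.univ : Finset (Fin (ar e.1)))).filter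
    fun p => p.1.2 p.2 = v

/-- Colors used by the canonical (`τ = id`) hypergraph relational 1-WL test after `ℓ`
rounds, starting from colors in `D`. -/
def WLC (D R : Type) : ℕ → Type :=
  fun ℓ => Nat.rec D (fun _ ih => ih × Multiset (Set (ih × ℕ) × R)) ℓ

/-- The hypergraph relational 1-WL test `hrwl₁`, with the canonical injective `τ`
(pairing), starting from the node coloring `c`. -/
def RelHG.hrwl [DecidableEq V] (H : RelHG V R ar) (c : V → D) :
    (ℓ : ℕ) → V → WLC D R ℓ
  | 0 => c
  | ℓ + 1 => fun v =>
      ⟨RelHG.hrwl H c ℓ v,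
        (H.incid v).val.map fun ei =>
          ({p : WLC D R ℓ × ℕ |
              ∃ j : Fin (ar ei.1.1), j ≠ ei.2 ∧
                p = (RelHG.hrwl H c ℓ (ei.1.2 j), (j : ℕ))},
            ei.1.1)⟩

/-- A hypergraph relational MPNN (HR-MPNN): layer dimensions `d`, message spaces `M`,
aggregation spaces `A`, and arbitrary relation-specific message, aggregation and
update functions for every layer. -/
structure HRMPNN (R : Type) where
  d : ℕ → ℕ
  M : ℕ → Type
  A : ℕ → Type
  msg : (ℓ : ℕ) → R → Set ((Fin (d ℓ) → ℝ) × ℕ) → M ℓ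
  agg : (ℓ : ℕ) → (Fin (d ℓ) → ℝ) → Multiset (M ℓ) → A ℓ
  up : (ℓ : ℕ) → (Fin (d ℓ) → ℝ) → A ℓ → Fin (d (ℓ + 1)) → ℝ

/-- The feature maps `h⁽ℓ⁾` computed by an HR-MPNN on a relational hypergraph `H`
from the initial feature map `x`. -/
def HRMPNN.h [DecidableEq V] (net : HRMPNN R) (H : RelHG V R ar)
    (x : V → Fin (net.d 0) → ℝ) : (ℓ : ℕ) → V → Fin (net.d ℓ) → ℝ
  | 0 => x
  | ℓ + 1 => fun v =>
      net.up ℓ (HRMPNN.h net H x ℓ v)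
        (net.agg ℓ (HRMPNN.h net H x ℓ v)
          ((H.incid v).val.map fun ei =>
            net.msg ℓ ei.1.1
              {p : (Fin (net.d ℓ) → ℝ) × ℕ |
                ∃ j : Fin (ar ei.1.1), j ≠ ei.2 ∧
                  p = (HRMPNN.h net H x ℓ (ei.1.2 j), (j : ℕ))}))

/-- The sign function: `1` on positive reals, `-1` otherwise. -/
noncomputable def sgn (x : ℝ) : ℝ := if 0 < x then 1 else -1

/-- The `(nm × n)`-matrix `Fts` with `(Fts)_{ij} = -1` if `m·j ≥ i` and `1` otherwise
(`1`-based indexing, as in the paper). -/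
def Fts (n m : ℕ) : Matrix (Fin (n * m)) (Fin n) ℝ :=
  Matrix.of fun i j => if (i : ℕ) + 1 ≤ m * ((j : ℕ) + 1) then -1 else 1

private lemma sgn_pos {x : ℝ} (h : 0 < x) : sgn x = 1 := if_pos h
private lemma sgn_nonpos {x : ℝ} (h : ¬ 0 < x) : sgn x = -1 := if_neg h

/-- zero set of an affine map in one real variable is finite unless both coeffs vanish -/
private lemma affine_zero_finite {u v : ℝ} (h : u ≠ 0 ∨ v ≠ 0) :
    {ε : ℝ | u + ε * v = 0}.Finite := by
  rcases eq_or_ne v 0 with hv | hv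
  · subst hv
    have hu : u ≠ 0 := by
      rcases h with h | h
      · exact h
      · exact absurd rfl h
    convert Set.finite_empty
    ext ε; simp [hu]
  · apply Set.Finite.subset (Set.finite_singleton (-u / v))
    intro ε hε
    simp only [Set.mem_setOf_eq] at hε
    have : ε * v = -u := by linarith
    simp only [Set.mem_singleton_iff]
    field_simp
    linarith
/-- there is a linear functional not vanishing on a finite set of nonzero vectors -/
private lemma exists_nonvanishing {d : ℕ} (P : Finset (Fin d → ℝ)) (hP : ∀ v ∈ P, v ≠ 0) :
    ∃ w : Fin d → ℝ, ∀ v ∈ P, dotProduct w v ≠ 0 := by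
  classical
  induction P using Finset.induction_on with
  | empty => exact ⟨0, by simp⟩
  | @insert v P hvP ih =>
    obtain ⟨w, hw⟩ := ih (fun u hu => hP u (Finset.mem_insert_of_mem hu))
    have hv : v ≠ 0 := hP v (Finset.mem_insert_self _ _)
    have hvv : dotProduct v v ≠ 0 := by
      intro h0; exact hv (dotProduct_self_eq_zero.mp h0)
    -- bad epsilons
    have hbad : (⋃ u ∈ (insert v P : Finset (Fin d → ℝ)),
        {ε : ℝ | dotProduct w u + ε * dotProduct v u = 0}).Finite := by
      apply Set.Finite.biUnion (Finset.finite_toSet _)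
      intro u hu
      rcases Finset.mem_insert.mp hu with rfl | hu
      · exact affine_zero_finite (Or.inr hvv)
      · exact affine_zero_finite (Or.inl (hw u hu))
    obtain ⟨ε, hε⟩ := (Set.Finite.infinite_compl hbad).nonempty
    refine ⟨w + ε • v, ?_⟩
    intro u hu
    have : dotProduct (w + ε • v) u
        = dotProduct w u + ε * dotProduct v u := by
      rw [add_dotProduct, smul_dotProduct]; simp [smul_eq_mul]
    rw [this]
    intro h0
    exact hε (Set.mem_biUnion hu h0)

/-- a linear functional injective on a finite set of vectors -/
private lemma exists_inj_dot {d : ℕ} (S : Finset (Fin d → ℝ)) :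
    ∃ w : Fin d → ℝ, ∀ x ∈ S, ∀ y ∈ S,
      dotProduct w x = dotProduct w y → x = y := by
  classical
  have hnz : ∀ v ∈ ((S ×ˢ S).filter (fun q => q.1 ≠ q.2)).image (fun q => q.1 - q.2), v ≠ 0 := by
    intro v hv
    obtain ⟨⟨x, y⟩, hq, rfl⟩ := Finset.mem_image.mp hv
    have := (Finset.mem_filter.mp hq).2
    exact sub_ne_zero_of_ne this
  obtain ⟨w, hw⟩ := exists_nonvanishing
    (((S ×ˢ S).filter (fun q => q.1 ≠ q.2)).image (fun q => q.1 - q.2)) hnz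
  refine ⟨w, fun x hx y hy hxy => ?_⟩
  by_contra hne
  have hmem : x - y ∈ ((S ×ˢ S).filter (fun q => q.1 ≠ q.2)).image (fun q => q.1 - q.2) :=
    Finset.mem_image.mpr ⟨(x, y), Finset.mem_filter.mpr ⟨Finset.mem_product.mpr ⟨hx, hy⟩, hne⟩, rfl⟩
  exact hw _ hmem (by rw [dotProduct_sub, hxy, sub_self])

private lemma Fts_apply {n m : ℕ} (hm : 0 < m) (i : Fin (n * m)) (c : Fin n) :
    Fts n m i c = if (i : ℕ) / m ≤ (c : ℕ) then (-1 : ℝ) else 1 := by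
  have hmc : m * ((c : ℕ) + 1) = ((c : ℕ) + 1) * m := Nat.mul_comm _ _
  have : ((i : ℕ) + 1 ≤ m * ((c : ℕ) + 1)) ↔ ((i : ℕ) / m ≤ (c : ℕ)) := by
    constructor
    · intro h
      have h2 : (i : ℕ) < ((c : ℕ) + 1) * m := by rw [← hmc]; omega
      have := (Nat.div_lt_iff_lt_mul hm).mpr h2
      omega
    · intro h
      have h2 : (i : ℕ) / m < (c : ℕ) + 1 := by omega
      have h3 := (Nat.div_lt_iff_lt_mul hm).mp h2
      rw [← hmc] at h3
      omega
  simp only [Fts, Matrix.of_apply]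
  by_cases h : (i : ℕ) / m ≤ (c : ℕ)
  · rw [if_pos (this.mpr h), if_pos h]
  · rw [if_neg (fun hh => h (this.mp hh)), if_neg h]

private lemma Fts_lo {n m : ℕ} (hm : 0 < m) (i : Fin (n * m)) (hi : (i : ℕ) < m) (c : Fin n) :
    Fts n m i c = -1 := by
  rw [Fts_apply hm, if_pos]
  rw [Nat.div_eq_of_lt hi]; exact Nat.zero_le _

private lemma Fts_col_inj {n m : ℕ} (hm : 0 < m) {a b : Fin n}
    (h : (fun i => Fts n m i a) = fun i => Fts n m i b) : a = b := by
  have key : ∀ a b : Fin n, (a : ℕ) < (b : ℕ) →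
      (fun i => Fts n m i a) ≠ fun i => Fts n m i b := by
    intro a b hab hfe
    have hlt : m * (b : ℕ) < n * m := by
      rw [mul_comm n m]
      exact mul_lt_mul_of_pos_left b.2 hm
    set i : Fin (n * m) := ⟨m * (b : ℕ), hlt⟩ with hi
    have hdiv : (i : ℕ) / m = (b : ℕ) := Nat.mul_div_cancel_left _ hm
    have h1 : Fts n m i a = 1 := by
      rw [Fts_apply hm, hdiv, if_neg (by omega)]
    have h2 : Fts n m i b = -1 := by
      rw [Fts_apply hm, hdiv, if_pos (le_refl _)]
    have := congrFun hfe i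
    rw [h1, h2] at this; norm_num at this
  rcases lt_trichotomy (a : ℕ) (b : ℕ) with hlt | heq | hlt
  · exact absurd h (key a b hlt)
  · exact Fin.ext heq
  · exact absurd h.symm (key b a hlt)

/-- classifier into `Fin n` realizing the partition induced by `g` -/
private lemma exists_classifier {ι κ : Type} [Fintype ι] [DecidableEq ι] [Nonempty ι]
    (g : ι → κ) {n : ℕ} (hcard : Fintype.card ι ≤ n) :
    ∃ cl : ι → Fin n, ∀ u v, cl u = cl v ↔ g u = g v := by
  classical
  let e := Fintype.equivFin ι
  let key : ι → Finset (Fin (Fintype.card ι)) :=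
    fun v => (Finset.univ.filter (fun u => g u = g v)).image e
  have hne : ∀ v : ι, (key v).Nonempty := fun v =>
    ⟨e v, Finset.mem_image_of_mem e (Finset.mem_filter.mpr ⟨Finset.mem_univ _, rfl⟩)⟩
  have hkey : ∀ u v : ι, g u = g v → key u = key v := by
    intro u v h
    show Finset.image _ _ = Finset.image _ _
    congr 1
    apply Finset.filter_congr
    intro w _
    rw [h]
  refine ⟨fun v => Fin.castLE hcard ((key v).min' (hne v)), fun u v => ?_⟩
  constructor
  · intro h
    have h1 : (key u).min' (hne u) = (key v).min' (hne v) := Fin.castLE_injective hcard h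
    have hmu : (key u).min' (hne u) ∈ key u := Finset.min'_mem _ _
    have hmv : (key u).min' (hne u) ∈ key v := h1 ▸ Finset.min'_mem _ _
    obtain ⟨u₀, hu₀, he₀⟩ := Finset.mem_image.mp hmu
    obtain ⟨v₀, hv₀, he₁⟩ := Finset.mem_image.mp hmv
    have : u₀ = v₀ := e.injective (by rw [he₀, he₁])
    have g1 : g u₀ = g u := (Finset.mem_filter.mp hu₀).2
    have g2 : g v₀ = g v := (Finset.mem_filter.mp hv₀).2
    rw [← g1, this, g2]
  · intro h
    have hk := hkey u v h
    have hmv : (key v).min' (hne v) ∈ key u := by rw [hk]; exact Finset.min'_mem _ _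
    have hmu : (key u).min' (hne u) ∈ key v := by rw [← hk]; exact Finset.min'_mem _ _
    have hmin : (key u).min' (hne u) = (key v).min' (hne v) :=
      le_antisymm (Finset.min'_le _ _ hmv) (Finset.min'_le _ _ hmu)
    exact congrArg (Fin.castLE hcard) hmin

/-- transfer of multiset `map`-equality along functions with the same kernel -/
private lemma map_eq_map_dir {α β γ : Type*} [Nonempty γ] (f : α → β) (g : α → γ)
    (h : ∀ a b, f a = f b ↔ g a = g b) (s t : Multiset α)
    (hst : s.map f = t.map f) : s.map g = t.map g := by
  classical
  let G : β → γ := fun y => if hy : ∃ a, f a = y then g hy.choose else Classical.arbitrary γ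
  have hG : ∀ a, G (f a) = g a := by
    intro a
    have hy : ∃ x, f x = f a := ⟨a, rfl⟩
    simp only [G, dif_pos hy]
    exact (h _ _).mp hy.choose_spec
  have h1 : s.map g = (s.map f).map G := by
    rw [Multiset.map_map]; exact (Multiset.map_congr rfl (fun a _ => (hG a).symm))
  have h2 : t.map g = (t.map f).map G := by
    rw [Multiset.map_map]; exact (Multiset.map_congr rfl (fun a _ => (hG a).symm))
  rw [h1, h2, hst]

private lemma map_eq_map_iff {α β γ : Type*} [Nonempty β] [Nonempty γ] (f : α → β) (g : α → γ)
    (h : ∀ a b, f a = f b ↔ g a = g b) (s t : Multiset α) :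
    s.map f = t.map f ↔ s.map g = t.map g :=
  ⟨map_eq_map_dir f g h s t, map_eq_map_dir g f (fun a b => (h a b).symm) s t⟩
private noncomputable def rkAsc (S : Finset ℝ) (z : ℝ) : ℕ := (S.filter (fun y => y < z)).card
private noncomputable def rkDesc (S : Finset ℝ) (z : ℝ) : ℕ := (S.filter (fun y => z < y)).card

private lemma rkAsc_lt_card {S : Finset ℝ} {z : ℝ} (hz : z ∈ S) : rkAsc S z < S.card :=
  Finset.card_lt_card ((Finset.ssubset_iff_of_subset (Finset.filter_subset _ _)).mpr
    ⟨z, hz, by simp⟩)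

private lemma rkDesc_lt_card {S : Finset ℝ} {z : ℝ} (hz : z ∈ S) : rkDesc S z < S.card :=
  Finset.card_lt_card ((Finset.ssubset_iff_of_subset (Finset.filter_subset _ _)).mpr
    ⟨z, hz, by simp⟩)

private lemma rkAsc_mono {S : Finset ℝ} {z z' : ℝ} (h : z ≤ z') : rkAsc S z ≤ rkAsc S z' := by
  apply Finset.card_le_card
  intro y hy
  rw [Finset.mem_filter] at hy ⊢
  exact ⟨hy.1, lt_of_lt_of_le hy.2 h⟩

private lemma rkDesc_anti {S : Finset ℝ} {z z' : ℝ} (h : z ≤ z') : rkDesc S z' ≤ rkDesc S z := by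
  apply Finset.card_le_card
  intro y hy
  rw [Finset.mem_filter] at hy ⊢
  exact ⟨hy.1, lt_of_le_of_lt h hy.2⟩

private lemma rkAsc_strict {S : Finset ℝ} {z z' : ℝ} (hz : z ∈ S) (h : z < z') :
    rkAsc S z < rkAsc S z' := by
  apply Finset.card_lt_card
  rw [Finset.ssubset_iff_of_subset]
  · exact ⟨z, Finset.mem_filter.mpr ⟨hz, h⟩, by simp⟩
  · intro y hy
    rw [Finset.mem_filter] at hy ⊢
    exact ⟨hy.1, lt_trans hy.2 h⟩

private lemma rkDesc_strict {S : Finset ℝ} {z z' : ℝ} (hz : z' ∈ S) (h : z < z') :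
    rkDesc S z' < rkDesc S z := by
  apply Finset.card_lt_card
  rw [Finset.ssubset_iff_of_subset]
  · exact ⟨z', Finset.mem_filter.mpr ⟨hz, h⟩, by simp⟩
  · intro y hy
    rw [Finset.mem_filter] at hy ⊢
    exact ⟨hy.1, lt_trans h hy.2⟩

private lemma rkAsc_inj {S : Finset ℝ} {z z' : ℝ} (hz : z ∈ S) (hz' : z' ∈ S)
    (h : rkAsc S z = rkAsc S z') : z = z' := by
  rcases lt_trichotomy z z' with hlt | he | hlt
  · exact absurd h (Nat.ne_of_lt (rkAsc_strict hz hlt))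
  · exact he
  · exact absurd h.symm (Nat.ne_of_lt (rkAsc_strict hz' hlt))

private lemma rkDesc_inj {S : Finset ℝ} {z z' : ℝ} (hz : z ∈ S) (hz' : z' ∈ S)
    (h : rkDesc S z = rkDesc S z') : z = z' := by
  rcases lt_trichotomy z z' with hlt | he | hlt
  · exact absurd h.symm (Nat.ne_of_lt (rkDesc_strict hz' hlt))
  · exact he
  · exact absurd h (Nat.ne_of_lt (rkDesc_strict hz hlt))

private lemma exists_between_ne {lo hi : ℝ} (h : lo < hi) :
    ∃ θ : ℝ, lo < θ ∧ θ < hi ∧ θ ≠ 0 := by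
  rcases eq_or_ne ((lo + hi) / 2) 0 with h0 | h0
  · refine ⟨hi / 2, by linarith, by linarith, ?_⟩
    have : 0 < hi := by linarith
    positivity
  · exact ⟨(lo + hi) / 2, by linarith, by linarith, h0⟩

private lemma rk_sep_asc (S : Finset ℝ) (a : ℕ)
    (hA : ∃ z ∈ S, a ≤ rkAsc S z) (hB : ∃ z ∈ S, rkAsc S z < a) :
    ∃ θ : ℝ, θ ≠ 0 ∧ ∀ z ∈ S, (θ < z ↔ a ≤ rkAsc S z) ∧ (z < θ ↔ rkAsc S z < a) := by
  classical
  set A := S.filter (fun z => a ≤ rkAsc S z) with hAdef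
  set B := S.filter (fun z => rkAsc S z < a) with hBdef
  have hAne : A.Nonempty := by obtain ⟨z, hz, h⟩ := hA; exact ⟨z, Finset.mem_filter.mpr ⟨hz, h⟩⟩
  have hBne : B.Nonempty := by obtain ⟨z, hz, h⟩ := hB; exact ⟨z, Finset.mem_filter.mpr ⟨hz, h⟩⟩
  have hlt : ∀ b ∈ B, ∀ a' ∈ A, b < a' := by
    intro b hb a' ha'
    have h1 := (Finset.mem_filter.mp hb).2
    have h2 := (Finset.mem_filter.mp ha').2
    by_contra hge
    have hmono : rkAsc S a' ≤ rkAsc S b := rkAsc_mono (le_of_not_gt hge)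
    omega
  have hmm : B.max' hBne < A.min' hAne :=
    hlt _ (Finset.max'_mem _ _) _ (Finset.min'_mem _ _)
  obtain ⟨θ, hθ1, hθ2, hθ0⟩ := exists_between_ne hmm
  refine ⟨θ, hθ0, fun z hz => ?_⟩
  by_cases h : a ≤ rkAsc S z
  · have hzA : z ∈ A := Finset.mem_filter.mpr ⟨hz, h⟩
    have : A.min' hAne ≤ z := Finset.min'_le _ _ hzA
    constructor
    · exact ⟨fun _ => h, fun _ => by linarith⟩
    · exact ⟨fun hlt' => by linarith, fun hh => absurd h (by omega)⟩
  · have hzB : z ∈ B := Finset.mem_filter.mpr ⟨hz, lt_of_not_ge h⟩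
    have : z ≤ B.max' hBne := Finset.le_max' _ _ hzB
    constructor
    · exact ⟨fun hlt' => by linarith, fun hh => absurd hh h⟩
    · exact ⟨fun _ => lt_of_not_ge h, fun _ => by linarith⟩

private lemma rk_sep_desc (S : Finset ℝ) (hpos : ∀ z ∈ S, (1:ℝ) ≤ z) (a : ℕ)
    (hA : ∃ z ∈ S, a ≤ rkDesc S z) (hB : ∃ z ∈ S, rkDesc S z < a) :
    ∃ θ : ℝ, 0 < θ ∧ ∀ z ∈ S, (z < θ ↔ a ≤ rkDesc S z) ∧ (θ < z ↔ rkDesc S z < a) := by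
  classical
  set A := S.filter (fun z => a ≤ rkDesc S z) with hAdef
  set B := S.filter (fun z => rkDesc S z < a) with hBdef
  have hAne : A.Nonempty := by obtain ⟨z, hz, h⟩ := hA; exact ⟨z, Finset.mem_filter.mpr ⟨hz, h⟩⟩
  have hBne : B.Nonempty := by obtain ⟨z, hz, h⟩ := hB; exact ⟨z, Finset.mem_filter.mpr ⟨hz, h⟩⟩
  have hlt : ∀ a' ∈ A, ∀ b ∈ B, a' < b := by
    intro a' ha' b hb
    have h1 := (Finset.mem_filter.mp ha').2
    have h2 := (Finset.mem_filter.mp hb).2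
    by_contra hge
    have hmono : rkDesc S a' ≤ rkDesc S b := rkDesc_anti (le_of_not_gt hge)
    omega
  have hmm : A.max' hAne < B.min' hBne :=
    hlt _ (Finset.max'_mem _ _) _ (Finset.min'_mem _ _)
  set θ := (A.max' hAne + B.min' hBne) / 2 with hθdef
  have hθ1 : A.max' hAne < θ := by rw [hθdef]; linarith
  have hθ2 : θ < B.min' hBne := by rw [hθdef]; linarith
  have hθpos : 0 < θ := by
    have h1 : (1:ℝ) ≤ A.max' hAne := hpos _ (Finset.filter_subset _ _ (Finset.max'_mem _ _))
    linarith
  refine ⟨θ, hθpos, fun z hz => ?_⟩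
  by_cases h : a ≤ rkDesc S z
  · have hzA : z ∈ A := Finset.mem_filter.mpr ⟨hz, h⟩
    have : z ≤ A.max' hAne := Finset.le_max' _ _ hzA
    constructor
    · exact ⟨fun _ => h, fun _ => by linarith⟩
    · exact ⟨fun hlt' => by linarith, fun hh => absurd h (by omega)⟩
  · have hzB : z ∈ B := Finset.mem_filter.mpr ⟨hz, lt_of_not_ge h⟩
    have : B.min' hBne ≤ z := Finset.min'_le _ _ hzB
    constructor
    · exact ⟨fun hlt' => by linarith, fun hh => absurd hh h⟩
    · exact ⟨fun _ => lt_of_not_ge h, fun _ => by linarith⟩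
/-- Inner layer: a one-layer sign network mapping each input vector `x μ` to an
arbitrary prescribed output `u μ`, for an injective family `x`. -/
private lemma exists_onehot {d S : ℕ} {ι : Type} [Fintype ι] [DecidableEq ι] [Nonempty ι]
    (x : ι → Fin d → ℝ) (hx : Function.Injective x) (u : ι → Fin S → ℝ) :
    ∃ (N : ℕ) (Wr : Matrix (Fin N) (Fin d) ℝ) (Y : Matrix (Fin S) (Fin N) ℝ),
      ∀ μ : ι, Y.mulVec (fun a => sgn (Wr.mulVec (x μ) a - 1)) = u μ := by
  classical
  obtain ⟨w, hw⟩ := exists_inj_dot (Finset.univ.image x)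
  set y : ι → ℝ := fun μ => dotProduct w (x μ) with hydef
  have hyinj : Function.Injective y := by
    intro μ μ' h
    exact hx (hw _ (Finset.mem_image_of_mem x (Finset.mem_univ μ)) _
      (Finset.mem_image_of_mem x (Finset.mem_univ μ')) h)
  set Sv : Finset ℝ := Finset.univ.image y with hSdef
  set N := Fintype.card ι with hNdef
  have hN1 : 1 ≤ N := Fintype.card_pos
  have hmemS : ∀ μ, y μ ∈ Sv := fun μ => Finset.mem_image_of_mem y (Finset.mem_univ μ)
  have hcard : Sv.card = N := by
    rw [hSdef, Finset.card_image_of_injective _ hyinj, Finset.card_univ]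
  set rk : ι → ℕ := fun μ => rkAsc Sv (y μ) with hrkdef
  have hrk_lt : ∀ μ, rk μ < N := fun μ => hcard ▸ rkAsc_lt_card (hmemS μ)
  set rkF : ι → Fin N := fun μ => ⟨rk μ, hrk_lt μ⟩ with hrkFdef
  have hrkF_inj : Function.Injective rkF := by
    intro μ μ' h
    have : rk μ = rk μ' := congrArg Fin.val h
    exact hyinj (rkAsc_inj (hmemS μ) (hmemS μ') this)
  have hbij : Function.Bijective rkF :=
    (Fintype.bijective_iff_injective_and_card rkF).mpr ⟨hrkF_inj, by simp [hNdef]⟩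
  set σ : Fin N → ι := fun b => (Equiv.ofBijective rkF hbij).symm b with hσdef
  have hσ1 : ∀ μ, σ (rkF μ) = μ := by
    intro μ
    rw [hσdef]
    exact (Equiv.ofBijective rkF hbij).symm_apply_apply μ
  have hσ2 : ∀ b, rkF (σ b) = b := by
    intro b
    rw [hσdef]
    exact (Equiv.ofBijective rkF hbij).apply_symm_apply b
  -- rows of Wr
  have hrows : ∀ a : Fin N, ∃ (wa : Fin d → ℝ) (ε : ℝ), (ε = 1 ∨ ε = -1) ∧ ∀ μ : ι,
      sgn (dotProduct wa (x μ) - 1)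
        = if (a : ℕ) = 0 then -1 else (if (a : ℕ) ≤ rk μ then ε else -ε) := by
    intro a
    by_cases ha0 : (a : ℕ) = 0
    · refine ⟨0, 1, Or.inl rfl, fun μ => ?_⟩
      rw [if_pos ha0, zero_dotProduct]
      exact sgn_nonpos (by norm_num)
    · have ha1 : 1 ≤ (a : ℕ) := Nat.one_le_iff_ne_zero.mpr ha0
      obtain ⟨μA, hμA⟩ : ∃ μA, rk μA = N - 1 :=
        ⟨σ ⟨N - 1, by omega⟩, congrArg Fin.val (hσ2 ⟨N - 1, by omega⟩)⟩
      obtain ⟨μB, hμB⟩ : ∃ μB, rk μB = 0 :=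
        ⟨σ ⟨0, by omega⟩, congrArg Fin.val (hσ2 ⟨0, by omega⟩)⟩
      have hAne : ∃ z ∈ Sv, (a : ℕ) ≤ rkAsc Sv z := by
        refine ⟨y μA, hmemS _, ?_⟩
        have hra : rkAsc Sv (y μA) = rk μA := rfl
        have := a.2
        omega
      have hBne : ∃ z ∈ Sv, rkAsc Sv z < (a : ℕ) := by
        refine ⟨y μB, hmemS _, ?_⟩
        have hrb : rkAsc Sv (y μB) = rk μB := rfl
        omega
      obtain ⟨θ, hθ0, hθ⟩ := rk_sep_asc Sv (a : ℕ) hAne hBne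
      refine ⟨θ⁻¹ • w, if 0 < θ then 1 else -1, by split <;> simp, fun μ => ?_⟩
      have hdot : dotProduct (θ⁻¹ • w) (x μ) = θ⁻¹ * y μ := by
        rw [smul_dotProduct, hydef]; simp [smul_eq_mul]
      rw [hdot, if_neg ha0]
      rcases lt_or_gt_of_ne hθ0 with hneg | hpos
      · -- θ < 0, ε = -1
        rw [if_neg (not_lt_of_gt hneg)]
        by_cases hle : (a : ℕ) ≤ rk μ
        · have hz : θ < y μ := ((hθ (y μ) (hmemS μ)).1).mpr hle
          have h1 : θ⁻¹ * y μ < 1 := by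
            have h2 : θ⁻¹ * y μ < θ⁻¹ * θ := by
              apply mul_lt_mul_of_neg_left hz
              exact inv_neg''.mpr hneg
            rwa [inv_mul_cancel₀ (ne_of_lt hneg)] at h2
          rw [if_pos hle]
          exact sgn_nonpos (by linarith)
        · have hz : y μ < θ := ((hθ (y μ) (hmemS μ)).2).mpr (lt_of_not_ge hle)
          have h1 : 1 < θ⁻¹ * y μ := by
            have h2 : θ⁻¹ * θ < θ⁻¹ * y μ := by
              apply mul_lt_mul_of_neg_left hz
              exact inv_neg''.mpr hneg
            rwa [inv_mul_cancel₀ (ne_of_lt hneg)] at h2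
          rw [if_neg hle]
          rw [sgn_pos (by linarith)]
          norm_num
      · -- θ > 0, ε = 1
        rw [if_pos hpos]
        by_cases hle : (a : ℕ) ≤ rk μ
        · have hz : θ < y μ := ((hθ (y μ) (hmemS μ)).1).mpr hle
          have h1 : 1 < θ⁻¹ * y μ := by
            have h2 : θ⁻¹ * θ < θ⁻¹ * y μ := by
              apply mul_lt_mul_of_pos_left hz
              exact inv_pos.mpr hpos
            rwa [inv_mul_cancel₀ (ne_of_gt hpos)] at h2
          rw [if_pos hle]
          exact sgn_pos (by linarith)
        · have hz : y μ < θ := ((hθ (y μ) (hmemS μ)).2).mpr (lt_of_not_ge hle)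
          have h1 : θ⁻¹ * y μ < 1 := by
            have h2 : θ⁻¹ * y μ < θ⁻¹ * θ := by
              apply mul_lt_mul_of_pos_left hz
              exact inv_pos.mpr hpos
            rwa [inv_mul_cancel₀ (ne_of_gt hpos)] at h2
          rw [if_neg hle]
          rw [sgn_nonpos (by linarith)]
  choose Wrow εr hεr hval using hrows
  set Wr : Matrix (Fin N) (Fin d) ℝ := Matrix.of (fun a j => Wrow a j) with hWrdef
  have hg : ∀ μ (a : Fin N), sgn (Wr.mulVec (x μ) a - 1)
      = if (a : ℕ) = 0 then -1 else (if (a : ℕ) ≤ rk μ then εr a else -(εr a)) := by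
    intro μ a
    have : Wr.mulVec (x μ) a = dotProduct (Wrow a) (x μ) := rfl
    rw [this, hval a μ]
  -- the Y matrix
  set F : Fin S → ℕ → ℝ := fun b i => if h : i < N then u (σ ⟨i, h⟩) b else 0 with hFdef
  set Y : Matrix (Fin S) (Fin N) ℝ := Matrix.of (fun b a =>
    if (a : ℕ) = 0 then -(F b 0 + F b (N - 1)) / 2
    else εr a * (F b (a : ℕ) - F b ((a : ℕ) - 1)) / 2) with hYdef
  refine ⟨N, Wr, Y, fun μ => ?_⟩
  funext b
  have hsum : Y.mulVec (fun a => sgn (Wr.mulVec (x μ) a - 1)) b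
      = ∑ a : Fin N, Y b a * sgn (Wr.mulVec (x μ) a - 1) := rfl
  rw [hsum]
  set T : ℕ → ℝ := fun i =>
    if i = 0 then (F b 0 + F b (N - 1)) / 2
    else (if i ≤ rk μ then 1 else -1) * (F b i - F b (i - 1)) / 2 with hTdef
  have hterm : ∀ a : Fin N, Y b a * sgn (Wr.mulVec (x μ) a - 1) = T (a : ℕ) := by
    intro a
    rw [hg, hTdef]
    simp only [hYdef, Matrix.of_apply]
    by_cases h0 : (a : ℕ) = 0
    · rw [if_pos h0, if_pos h0, if_pos h0]
      ring
    · rw [if_neg h0, if_neg h0, if_neg h0]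
      rcases hεr a with he | he <;> rw [he] <;> by_cases hle : (a : ℕ) ≤ rk μ <;>
        simp only [if_pos, if_neg, hle, if_true, if_false] <;> ring
  rw [Finset.sum_congr rfl (fun a _ => hterm a)]
  rw [Fin.sum_univ_eq_sum_range T N]
  have hrange : Finset.range N = insert 0 (Finset.Ico 1 N) := by
    ext i; simp [Finset.mem_Ico]; omega
  rw [hrange, Finset.sum_insert (by simp)]
  rw [Finset.sum_Ico_eq_sum_range]
  have hT0 : T 0 = (F b 0 + F b (N - 1)) / 2 := by rw [hTdef]; norm_num
  have hbμ : rk μ ≤ N - 1 := by have := hrk_lt μ; omega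
  rw [← Finset.sum_range_add_sum_Ico _ hbμ]
  have hpiece1 : ∀ i ∈ Finset.range (rk μ), T (1 + i) = F b (i + 1) / 2 - F b i / 2 := by
    intro i hi
    rw [Finset.mem_range] at hi
    rw [hTdef]
    simp only
    rw [if_neg (by omega), if_pos (by omega)]
    have : 1 + i - 1 = i := by omega
    rw [this, show 1 + i = i + 1 from by omega]
    ring
  have hpiece2 : ∀ i ∈ Finset.Ico (rk μ) (N - 1), T (1 + i) = -(F b (i + 1) / 2 - F b i / 2) := by
    intro i hi
    rw [Finset.mem_Ico] at hi
    rw [hTdef]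
    simp only
    rw [if_neg (by omega), if_neg (by omega)]
    have : 1 + i - 1 = i := by omega
    rw [this, show 1 + i = i + 1 from by omega]
    ring
  rw [Finset.sum_congr rfl hpiece1, Finset.sum_congr rfl hpiece2]
  rw [Finset.sum_range_sub (fun i => F b i / 2)]
  rw [Finset.sum_neg_distrib]
  have htel2 : ∑ i ∈ Finset.Ico (rk μ) (N - 1), (F b (i + 1) / 2 - F b i / 2)
      = F b (N - 1) / 2 - F b (rk μ) / 2 := by
    rw [Finset.sum_Ico_eq_sub _ hbμ]
    rw [Finset.sum_range_sub (fun i => F b i / 2), Finset.sum_range_sub (fun i => F b i / 2)]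
    ring
  rw [htel2, hT0]
  have hF : F b (rk μ) = u μ b := by
    rw [hFdef]
    simp only
    rw [dif_pos (hrk_lt μ)]
    have : (⟨rk μ, hrk_lt μ⟩ : Fin N) = rkF μ := rfl
    rw [this, hσ1 μ]
  rw [hF]
  ring
/-- Final layer: a one-layer sign network computing, from an arbitrary finite family of
input vectors having a constant `-1` bias coordinate, the `Fts`-column of a classifier
realizing the partition induced by the inputs. -/
private lemma exists_final {d n m : ℕ} (hm : 0 < m) {ι : Type} [Fintype ι] [DecidableEq ι]
    [Nonempty ι] (hcard : Fintype.card ι ≤ n)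
    (x : ι → Fin d → ℝ) (b₀ : Fin d) (hb : ∀ v, x v b₀ = -1) :
    ∃ (W : Matrix (Fin (n * m)) (Fin d) ℝ) (cl : ι → Fin n),
      (∀ u v, cl u = cl v ↔ x u = x v) ∧
      ∀ v, (fun i : Fin (n * m) => Fts n m i (cl v)) = fun i => sgn (W.mulVec (x v) i - 1) := by
  classical
  obtain ⟨w0, hw0⟩ := exists_inj_dot (Finset.univ.image x)
  set eb : Fin d → ℝ := fun i => if i = b₀ then (-1 : ℝ) else 0 with hebdef
  have hdot_eb : ∀ v, dotProduct eb (x v) = 1 := by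
    intro v
    have h1 : dotProduct eb (x v)
        = ∑ i : Fin d, (if i = b₀ then (-1 : ℝ) else 0) * x v i := rfl
    rw [h1]
    rw [Finset.sum_eq_single b₀]
    · rw [if_pos rfl, hb v]; ring
    · intro i _ hi; rw [if_neg hi]; ring
    · intro h; exact absurd (Finset.mem_univ b₀) h
  set C : ℝ := 1 + ∑ v : ι, |dotProduct w0 (x v)| with hCdef
  set y : ι → ℝ := fun v => dotProduct w0 (x v) + C with hydef
  have hy1 : ∀ v, 1 ≤ y v := by
    intro v
    have h1 : |dotProduct w0 (x v)| ≤ ∑ u : ι, |dotProduct w0 (x u)| :=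
      Finset.single_le_sum (f := fun u => |dotProduct w0 (x u)|)
        (fun u _ => abs_nonneg _) (Finset.mem_univ v)
    have h2 := neg_abs_le (dotProduct w0 (x v))
    simp only [hydef, hCdef]
    linarith
  have hyx : ∀ u v, y u = y v ↔ x u = x v := by
    intro u v
    constructor
    · intro h
      have : dotProduct w0 (x u) = dotProduct w0 (x v) := by
        simp only [hydef] at h; linarith
      exact hw0 _ (Finset.mem_image_of_mem x (Finset.mem_univ u)) _
        (Finset.mem_image_of_mem x (Finset.mem_univ v)) this
    · intro h; simp only [hydef, h]
  set Sv : Finset ℝ := Finset.univ.image y with hSdef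
  have hmemS : ∀ v, y v ∈ Sv := fun v => Finset.mem_image_of_mem y (Finset.mem_univ v)
  have hSpos : ∀ z ∈ Sv, (1 : ℝ) ≤ z := by
    intro z hz
    obtain ⟨v, _, rfl⟩ := Finset.mem_image.mp hz
    exact hy1 v
  have hSne : Sv.Nonempty := ⟨y (Classical.arbitrary ι), hmemS _⟩
  set rk : ι → ℕ := fun v => rkDesc Sv (y v) with hrkdef
  have hrk_lt : ∀ v, rk v < n := by
    intro v
    have h1 : rkDesc Sv (y v) < Sv.card := rkDesc_lt_card (hmemS v)
    have h2 : Sv.card ≤ Fintype.card ι := by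
      rw [hSdef]
      exact le_trans (Finset.card_image_le) (by rw [Finset.card_univ])
    have h0 : rk v = rkDesc Sv (y v) := rfl
    omega
  set cl : ι → Fin n := fun v => ⟨rk v, hrk_lt v⟩ with hcldef
  have hcl : ∀ u v, cl u = cl v ↔ x u = x v := by
    intro u v
    constructor
    · intro h
      have h1 : rk u = rk v := congrArg Fin.val h
      exact (hyx u v).mp (rkDesc_inj (hmemS u) (hmemS v) h1)
    · intro h
      have : y u = y v := (hyx u v).mpr h
      apply Fin.ext
      show rk u = rk v
      rw [hrkdef]
      simp only [this]
  have hrows : ∀ k : ℕ, ∃ wk : Fin d → ℝ, ∀ v,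
      sgn (dotProduct wk (x v) - 1) = if k ≤ rk v then (-1 : ℝ) else 1 := by
    intro k
    by_cases hk0 : k = 0
    · refine ⟨0, fun v => ?_⟩
      rw [if_pos (by omega), zero_dotProduct]
      exact sgn_nonpos (by norm_num)
    · by_cases hA : ∃ z ∈ Sv, k ≤ rkDesc Sv z
      · have hB : ∃ z ∈ Sv, rkDesc Sv z < k := by
          refine ⟨Sv.max' hSne, Finset.max'_mem _ _, ?_⟩
          have : Sv.filter (fun z => Sv.max' hSne < z) = ∅ := by
            apply Finset.filter_false_of_mem
            intro z hz
            exact not_lt_of_ge (Finset.le_max' _ _ hz)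
          have hz : rkDesc Sv (Sv.max' hSne) = 0 := by
            rw [rkDesc, this, Finset.card_empty]
          omega
        obtain ⟨θ, hθpos, hθ⟩ := rk_sep_desc Sv hSpos k hA hB
        refine ⟨θ⁻¹ • (w0 + C • eb), fun v => ?_⟩
        have hdot : dotProduct (θ⁻¹ • (w0 + C • eb)) (x v) = θ⁻¹ * y v := by
          rw [smul_dotProduct, add_dotProduct, smul_dotProduct, hdot_eb]
          simp only [hydef, smul_eq_mul]
          ring
        rw [hdot]
        by_cases hle : k ≤ rk v
        · have hz : y v < θ := ((hθ (y v) (hmemS v)).1).mpr hle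
          have h1 : θ⁻¹ * y v < 1 := by
            have h2 : θ⁻¹ * y v < θ⁻¹ * θ := by
              apply mul_lt_mul_of_pos_left hz (inv_pos.mpr hθpos)
            rwa [inv_mul_cancel₀ (ne_of_gt hθpos)] at h2
          rw [if_pos hle]
          exact sgn_nonpos (by linarith)
        · have hz : θ < y v := ((hθ (y v) (hmemS v)).2).mpr (lt_of_not_ge hle)
          have h1 : 1 < θ⁻¹ * y v := by
            have h2 : θ⁻¹ * θ < θ⁻¹ * y v := by
              apply mul_lt_mul_of_pos_left hz (inv_pos.mpr hθpos)
            rwa [inv_mul_cancel₀ (ne_of_gt hθpos)] at h2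
          rw [if_neg hle]
          exact sgn_pos (by linarith)
      · push_neg at hA
        refine ⟨fun i => if i = b₀ then (-2 : ℝ) else 0, fun v => ?_⟩
        have hd2 : dotProduct (fun i => if i = b₀ then (-2 : ℝ) else 0) (x v) = 2 := by
          have h1 : dotProduct (fun i => if i = b₀ then (-2 : ℝ) else 0) (x v)
              = ∑ i : Fin d, (if i = b₀ then (-2 : ℝ) else 0) * x v i := rfl
          rw [h1, Finset.sum_eq_single b₀]
          · rw [if_pos rfl, hb v]; ring
          · intro i _ hi; rw [if_neg hi]; ring
          · intro h; exact absurd (Finset.mem_univ b₀) h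
        rw [hd2]
        have : ¬ k ≤ rk v := by
          have h3 := hA (y v) (hmemS v)
          have h0 : rk v = rkDesc Sv (y v) := rfl
          omega
        rw [if_neg this]
        exact sgn_pos (by norm_num)
  choose Wrow hWrow using hrows
  set W : Matrix (Fin (n * m)) (Fin d) ℝ := Matrix.of (fun i j => Wrow ((i : ℕ) / m) j) with hWdef
  refine ⟨W, cl, hcl, fun v => ?_⟩
  funext i
  have h1 : W.mulVec (x v) i = dotProduct (Wrow ((i : ℕ) / m)) (x v) := rfl
  rw [Fts_apply hm, h1, hWrow]
/-- Message type for a relation of arity `a` over `n` colors: a position `i` and a coloring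
of the positions, normalized to color `0` at position `i`. -/
private abbrev TT (n a : ℕ) : Type := {pa : Fin a × (Fin a → Fin n) // ((pa.2 pa.1 : Fin n) : ℕ) = 0}

/-- The positional encoding vectors. -/
private def pvec (m : ℕ) (j : ℕ) (idx : ℕ) : ℝ :=
  if idx % m = j then (if idx < m then -3 else 0) else 2

/-- The product vector associated to a message. -/
private noncomputable def xx (n m a : ℕ) (μ : TT n a) : Fin (n * m) → ℝ := fun idx =>
  ∏ j ∈ Finset.univ.filter (fun j => j ≠ μ.1.1),
    (Fts n m idx (μ.1.2 j) + pvec m (j : ℕ) (idx : ℕ))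

private lemma fac_val {n m : ℕ} (hm : 0 < m) (idx : Fin (n * m)) (c : Fin n) (j : ℕ) :
    Fts n m idx c + pvec m j (idx : ℕ) =
      if (idx : ℕ) % m = j then
        (if (idx : ℕ) < m then (-4 : ℝ) else (if (idx : ℕ) / m ≤ (c : ℕ) then -1 else 1))
      else (if (idx : ℕ) / m ≤ (c : ℕ) then 3 else 5) - 2 := by
  rw [Fts_apply hm, pvec]
  by_cases h1 : (idx : ℕ) % m = j
  · rw [if_pos h1, if_pos h1]
    by_cases h2 : (idx : ℕ) < m
    · rw [if_pos h2, if_pos h2, if_pos (by rw [Nat.div_eq_of_lt h2]; exact Nat.zero_le _)]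
      norm_num
    · rw [if_neg h2, if_neg h2]; split <;> norm_num
  · rw [if_neg h1, if_neg h1]; split <;> norm_num

private lemma fac_val' {n m : ℕ} (hm : 0 < m) (idx : Fin (n * m)) (c : Fin n) (j : ℕ)
    (hj : (idx : ℕ) % m ≠ j) :
    Fts n m idx c + pvec m j (idx : ℕ) = if (idx : ℕ) / m ≤ (c : ℕ) then 1 else 3 := by
  rw [fac_val hm, if_neg hj]; split <;> norm_num

private lemma fac_pos' {n m : ℕ} (hm : 0 < m) (idx : Fin (n * m)) (c : Fin n) (j : ℕ)
    (hj : (idx : ℕ) % m ≠ j) :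
    0 < Fts n m idx c + pvec m j (idx : ℕ) := by
  rw [fac_val' hm _ _ _ hj]; split <;> norm_num

private lemma xx_lo {n m a : ℕ} (hm : 0 < m) (μ : TT n a) (idx : Fin (n * m))
    (hidx : (idx : ℕ) < m) :
    xx n m a μ idx
      = if (∃ j : Fin a, j ≠ μ.1.1 ∧ (j : ℕ) = (idx : ℕ)) then (-4 : ℝ) else 1 := by
  classical
  by_cases hex : ∃ j : Fin a, j ≠ μ.1.1 ∧ (j : ℕ) = (idx : ℕ)
  · obtain ⟨j₀, hj₀ne, hj₀val⟩ := hex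
    rw [if_pos ⟨j₀, hj₀ne, hj₀val⟩]
    have hj₀mem : j₀ ∈ Finset.univ.filter (fun j => j ≠ μ.1.1) :=
      Finset.mem_filter.mpr ⟨Finset.mem_univ _, hj₀ne⟩
    rw [xx, ← Finset.mul_prod_erase _ _ hj₀mem]
    have hfac : Fts n m idx (μ.1.2 j₀) + pvec m (j₀ : ℕ) (idx : ℕ) = -4 := by
      rw [fac_val hm, if_pos (by rw [Nat.mod_eq_of_lt hidx, hj₀val]), if_pos hidx]
    rw [hfac]
    have hrest : ∏ j ∈ (Finset.univ.filter (fun j => j ≠ μ.1.1)).erase j₀,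
        (Fts n m idx (μ.1.2 j) + pvec m (j : ℕ) (idx : ℕ)) = 1 := by
      apply Finset.prod_eq_one
      intro j hj
      have hjne : j ≠ j₀ := (Finset.mem_erase.mp hj).1
      have hvne : (idx : ℕ) % m ≠ (j : ℕ) := by
        rw [Nat.mod_eq_of_lt hidx]
        intro hv
        exact hjne (Fin.ext (by omega))
      rw [fac_val' hm _ _ _ hvne, if_pos (by rw [Nat.div_eq_of_lt hidx]; exact Nat.zero_le _)]
    rw [hrest]; ring
  · rw [if_neg hex]
    rw [xx]
    apply Finset.prod_eq_one
    intro j hj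
    have hjne : j ≠ μ.1.1 := (Finset.mem_filter.mp hj).2
    have hvne : (idx : ℕ) % m ≠ (j : ℕ) := by
      rw [Nat.mod_eq_of_lt hidx]
      intro hv
      exact hex ⟨j, hjne, hv.symm⟩
    rw [fac_val' hm _ _ _ hvne, if_pos (by rw [Nat.div_eq_of_lt hidx]; exact Nat.zero_le _)]

private lemma xx_neg {n m a : ℕ} (hm : 0 < m) (μ : TT n a) (idx : Fin (n * m))
    (hidx : m ≤ (idx : ℕ)) :
    xx n m a μ idx < 0
      ↔ ∃ j : Fin a, j ≠ μ.1.1 ∧ (j : ℕ) = (idx : ℕ) % m ∧ (idx : ℕ) / m ≤ (μ.1.2 j : ℕ) := by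
  classical
  by_cases hex : ∃ j : Fin a, j ≠ μ.1.1 ∧ (j : ℕ) = (idx : ℕ) % m ∧ (idx : ℕ) / m ≤ (μ.1.2 j : ℕ)
  · obtain ⟨j₀, hj₀ne, hj₀val, hj₀le⟩ := hex
    have hj₀mem : j₀ ∈ Finset.univ.filter (fun j => j ≠ μ.1.1) :=
      Finset.mem_filter.mpr ⟨Finset.mem_univ _, hj₀ne⟩
    have hneg : xx n m a μ idx < 0 := by
      rw [xx, ← Finset.mul_prod_erase _ _ hj₀mem]
      have hfac : Fts n m idx (μ.1.2 j₀) + pvec m (j₀ : ℕ) (idx : ℕ) = -1 := by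
        rw [fac_val hm, if_pos hj₀val.symm, if_neg (by omega), if_pos hj₀le]
      rw [hfac]
      have hrest : 0 < ∏ j ∈ (Finset.univ.filter (fun j => j ≠ μ.1.1)).erase j₀,
          (Fts n m idx (μ.1.2 j) + pvec m (j : ℕ) (idx : ℕ)) := by
        apply Finset.prod_pos
        intro j hj
        have hjne : j ≠ j₀ := (Finset.mem_erase.mp hj).1
        have hvne : (idx : ℕ) % m ≠ (j : ℕ) := by
          intro hv
          exact hjne (Fin.ext (by omega))
        exact fac_pos' hm _ _ _ hvne
      nlinarith
    exact ⟨fun _ => ⟨j₀, hj₀ne, hj₀val, hj₀le⟩, fun _ => hneg⟩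
  · have hpos : 0 < xx n m a μ idx := by
      rw [xx]
      apply Finset.prod_pos
      intro j hj
      have hjne : j ≠ μ.1.1 := (Finset.mem_filter.mp hj).2
      by_cases hv : (idx : ℕ) % m = (j : ℕ)
      · have hnle : ¬ (idx : ℕ) / m ≤ (μ.1.2 j : ℕ) := by
          intro hle
          exact hex ⟨j, hjne, hv.symm, hle⟩
        rw [fac_val hm, if_pos hv, if_neg (by omega), if_neg hnle]
        norm_num
      · exact fac_pos' hm _ _ _ hv
    exact iff_of_false (not_lt_of_gt hpos) hex

private lemma xx_inj {n m a : ℕ} (hm : 0 < m) (hn : 0 < n) (ha : a ≤ m) :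
    Function.Injective (xx n m a) := by
  have hmnm : m ≤ n * m := Nat.le_mul_of_pos_left m hn
  -- first component
  have hfst : ∀ μ μ' : TT n a, xx n m a μ = xx n m a μ' → μ.1.1 = μ'.1.1 := by
    intro μ μ' heq
    by_contra hne
    have hlt : ((μ'.1.1 : ℕ)) < n * m := lt_of_lt_of_le (lt_of_lt_of_le μ'.1.1.2 ha) hmnm
    set idx : Fin (n * m) := ⟨(μ'.1.1 : ℕ), hlt⟩ with hidxdef
    have hidxm : (idx : ℕ) < m := lt_of_lt_of_le μ'.1.1.2 ha
    have h1 : xx n m a μ idx = -4 := by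
      rw [xx_lo hm _ _ hidxm, if_pos ⟨μ'.1.1, fun h => hne h.symm, rfl⟩]
    have h2 : xx n m a μ' idx = 1 := by
      rw [xx_lo hm _ _ hidxm, if_neg]
      rintro ⟨j, hjne, hjval⟩
      exact hjne (Fin.ext hjval)
    rw [heq] at h1
    rw [h1] at h2
    norm_num at h2
  -- second component, one-sided bound
  have hle : ∀ μ μ' : TT n a, xx n m a μ = xx n m a μ' → μ.1.1 = μ'.1.1 →
      ∀ j : Fin a, j ≠ μ.1.1 → (μ.1.2 j : ℕ) ≤ (μ'.1.2 j : ℕ) := by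
    intro μ μ' heq hii j hj
    by_contra hgt
    push_neg at hgt
    set b := (μ.1.2 j : ℕ) with hbdef
    have hb1 : 1 ≤ b := by omega
    have hbn : b < n := (μ.1.2 j).2
    have hlt : m * b + (j : ℕ) < n * m := by
      have h1 : (j : ℕ) < m := lt_of_lt_of_le j.2 ha
      have h2 : m * (b + 1) ≤ m * n := Nat.mul_le_mul_left m (by omega)
      have h3 : m * n = n * m := Nat.mul_comm m n
      have h4 : m * b + (j : ℕ) < m * (b + 1) := by rw [Nat.mul_add]; omega
      omega
    set idx : Fin (n * m) := ⟨m * b + (j : ℕ), hlt⟩ with hidxdef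
    have hidxm : m ≤ (idx : ℕ) := by
      have : m * 1 ≤ m * b := Nat.mul_le_mul_left m hb1
      show m ≤ m * b + (j : ℕ)
      omega
    have hmod : (idx : ℕ) % m = (j : ℕ) := by
      show (m * b + (j : ℕ)) % m = (j : ℕ)
      rw [Nat.mul_add_mod]
      exact Nat.mod_eq_of_lt (lt_of_lt_of_le j.2 ha)
    have hdiv : (idx : ℕ) / m = b := by
      show (m * b + (j : ℕ)) / m = b
      rw [Nat.mul_add_div hm, Nat.div_eq_of_lt (lt_of_lt_of_le j.2 ha)]
      omega
    have h1 : xx n m a μ idx < 0 := by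
      rw [xx_neg hm _ _ hidxm]
      exact ⟨j, hj, hmod.symm, by rw [hdiv]⟩
    have h2 : ¬ xx n m a μ' idx < 0 := by
      rw [xx_neg hm _ _ hidxm]
      rintro ⟨j', hj'ne, hj'val, hj'le⟩
      have : j' = j := Fin.ext (by omega)
      subst this
      rw [hdiv] at hj'le
      omega
    rw [heq] at h1
    exact h2 h1
  intro μ μ' heq
  have hi := hfst μ μ' heq
  have hff : μ.1.2 = μ'.1.2 := by
    funext j
    by_cases hji : j = μ.1.1
    · subst hji
      apply Fin.ext
      rw [μ.2, hi]
      exact μ'.2.symm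
    · apply Fin.ext
      apply Nat.le_antisymm
      · exact hle μ μ' heq hi j hji
      · exact hle μ' μ heq.symm hi.symm j (by rw [← hi]; exact hji)
  exact Subtype.ext (Prod.ext hi hff)

private lemma hrwl_succ {V R D : Type} [DecidableEq V] {ar : R → ℕ}
    (H : RelHG V R ar) (c : V → D) (ℓ : ℕ) (v : V) :
    H.hrwl c (ℓ + 1) v =
      ((H.hrwl c ℓ v,
        (H.incid v).val.map fun ei =>
          ({p : WLC D R ℓ × ℕ |
              ∃ j : Fin (ar ei.1.1), j ≠ ei.2 ∧
                p = (H.hrwl c ℓ (ei.1.2 j), (j : ℕ))},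
            ei.1.1)) : WLC D R ℓ × Multiset (Set (WLC D R ℓ × ℕ) × R)) := rfl

private lemma hrwl_succ_iff {V R D : Type} [DecidableEq V] {ar : R → ℕ}
    (H : RelHG V R ar) (c : V → D) (ℓ : ℕ) (u v : V) :
    H.hrwl c (ℓ + 1) u = H.hrwl c (ℓ + 1) v ↔
      (H.hrwl c ℓ u = H.hrwl c ℓ v ∧
        (H.incid u).val.map (fun ei =>
          (({p : WLC D R ℓ × ℕ |
              ∃ j : Fin (ar ei.1.1), j ≠ ei.2 ∧
                p = (H.hrwl c ℓ (ei.1.2 j), (j : ℕ))},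
            ei.1.1) : Set (WLC D R ℓ × ℕ) × R))
          = (H.incid v).val.map (fun ei =>
          (({p : WLC D R ℓ × ℕ |
              ∃ j : Fin (ar ei.1.1), j ≠ ei.2 ∧
                p = (H.hrwl c ℓ (ei.1.2 j), (j : ℕ))},
            ei.1.1) : Set (WLC D R ℓ × ℕ) × R))) := by
  constructor
  · intro h
    rw [hrwl_succ, hrwl_succ] at h
    exact ⟨congrArg Prod.fst h, congrArg Prod.snd h⟩
  · rintro ⟨h1, h2⟩
    rw [hrwl_succ, hrwl_succ, h1, h2]

/-- Let `G = (V, E, R, c)` be a relational hypergraph with `|V| = n`,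
maximum edge arity `m`, and `L ≥ 0`. Then there exist feature maps
`h⁽ℓ⁾ : V → ℝ^{nm}`, matrices `W⁽ℓ⁾` and, for each relation `r`, matrices `Wᵣ⁽ℓ⁾`,
`Yᵣ⁽ℓ⁾`, and positional encodings `p₁, …, p_m ∈ ℝ^{nm}` such that: (i) `h⁽ℓ⁾ ≡ hrwl₁⁽ℓ⁾`
for all `0 ≤ ℓ ≤ L`; (ii) every `h_v⁽ℓ⁾` is a column of `Fts`; (iii) the update rule
`h_v⁽ℓ⁺¹⁾ = sign(W⁽ℓ⁾ [h_v⁽ℓ⁾ ∥ Σ_{(e,i) ∈ E(v)} Y_{ρ(e)}⁽ℓ⁾ sign(W_{ρ(e)}⁽ℓ⁾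
(⊙_{j ≠ i}(h_{e(j)}⁽ℓ⁾ + p_j)) − 1)] − 1)` holds for all `0 ≤ ℓ < L` and `v ∈ V`. -/
theorem exists_sign_HRMPNN_simulating_hrwl
    {V R D : Type} [Fintype V] [DecidableEq V] [Fintype R] [DecidableEq R]
    {ar : R → ℕ} (har : ∀ r : R, 1 ≤ ar r)
    (H : RelHG V R ar) (hE : H.edges.Nonempty) (c : V → D)
    (n m : ℕ) (hn : Fintype.card V = n)
    (hm : m = H.edges.sup fun e => ar e.1)
    (L : ℕ) :
    ∃ (h : ℕ → V → Fin (n * m) → ℝ)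
      (s : ℕ → ℕ)
      (W : (ℓ : ℕ) → Matrix (Fin (n * m)) (Fin (n * m + s ℓ)) ℝ)
      (t : ℕ → R → ℕ)
      (Wr : (ℓ : ℕ) → (r : R) → Matrix (Fin (t ℓ r)) (Fin (n * m)) ℝ)
      (Y : (ℓ : ℕ) → (r : R) → Matrix (Fin (s ℓ)) (Fin (t ℓ r)) ℝ)
      (p : ℕ → Fin (n * m) → ℝ),
      (∀ ℓ ≤ L, ∀ u v : V, h ℓ u = h ℓ v ↔ H.hrwl c ℓ u = H.hrwl c ℓ v) ∧
      (∀ ℓ ≤ L, ∀ v : V, ∃ j : Fin n, h ℓ v = fun i => Fts n m i j) ∧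
      (∀ ℓ < L, ∀ v : V,
        h (ℓ + 1) v = fun i =>
          sgn ((W ℓ).mulVec
              (Fin.append (h ℓ v)
                (∑ ei ∈ H.incid v,
                  (Y ℓ ei.1.1).mulVec fun k =>
                    sgn ((Wr ℓ ei.1.1).mulVec
                        (fun idx =>
                          ∏ j ∈ Finset.univ.filter (fun j => j ≠ ei.2),
                            (h ℓ (ei.1.2 j) idx + p (j : ℕ) idx)) k - 1))) i - 1)) := by
  classical
  obtain ⟨e₀, he₀⟩ := hE
  have harity : ∀ e : Σ r : R, Fin (ar r) → V, e ∈ H.edges → ar e.1 ≤ m := by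
    intro e he
    rw [hm]
    exact Finset.le_sup (f := fun e => ar e.1) he
  have hm1 : 0 < m := lt_of_lt_of_le (har e₀.1) (harity e₀ he₀)
  haveI hV : Nonempty V := ⟨e₀.2 ⟨0, har e₀.1⟩⟩
  have hn1 : 0 < n := hn ▸ Fintype.card_pos
  have hnm0 : 0 < n * m := Nat.mul_pos hn1 hm1
  set z0 : Fin n := ⟨0, hn1⟩ with hz0
  haveI hMne : Nonempty (Σ r : R, TT n (ar r)) :=
    ⟨⟨e₀.1, ⟨(⟨0, har e₀.1⟩, fun _ => z0), rfl⟩⟩⟩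
  set s := Fintype.card (Σ r : R, TT n (ar r)) with hsdef
  set Eqv := Fintype.equivFin (Σ r : R, TT n (ar r)) with hEqv
  set uvec : (r : R) → TT n (ar r) → Fin s → ℝ :=
    fun r μ b => if b = Eqv ⟨r, μ⟩ then 1 else 0 with huvec
  -- inner nets, one per relation
  have hInner : ∀ r : R, ∃ (t : ℕ) (Wr : Matrix (Fin t) (Fin (n * m)) ℝ)
      (Y : Matrix (Fin s) (Fin t) ℝ), ar r ≤ m → ∀ μ : TT n (ar r),
        Y.mulVec (fun a => sgn (Wr.mulVec (xx n m (ar r) μ) a - 1)) = uvec r μ := by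
    intro r
    by_cases hr : ar r ≤ m
    · haveI : Nonempty (TT n (ar r)) := ⟨⟨(⟨0, har r⟩, fun _ => z0), rfl⟩⟩
      obtain ⟨N, Wr, Y, hOY⟩ := exists_onehot (xx n m (ar r)) (xx_inj hm1 hn1 hr) (uvec r)
      exact ⟨N, Wr, Y, fun _ => hOY⟩
    · exact ⟨0, 0, 0, fun h => absurd h hr⟩
  choose tF WrF YF hIn using hInner
  -- message extraction
  set msgF : (V → Fin n) → (ei : Σ e : Σ r : R, Fin (ar r) → V, Fin (ar e.1)) →
      TT n (ar ei.1.1) := fun col ei =>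
    ⟨(ei.2, Function.update (fun j => col (ei.1.2 j)) ei.2 z0),
      by simp [hz0]⟩ with hmsgF
  set glob : (V → Fin n) → (Σ e : Σ r : R, Fin (ar r) → V, Fin (ar e.1)) → Fin s :=
    fun col ei => Eqv ⟨ei.1.1, msgF col ei⟩ with hglob
  set Inv : ℕ → (V → Fin n) → Prop :=
    fun ℓ col => ∀ u v : V, col u = col v ↔ H.hrwl c ℓ u = H.hrwl c ℓ v with hInv
  -- initial classifier
  obtain ⟨col₀, hcol₀⟩ := exists_classifier (H.hrwl c 0) (le_of_eq hn)
  have hcol₀' : Inv 0 col₀ := hcol₀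
  -- the inductive step
  have STEP : ∀ (ℓ : ℕ) (col : V → Fin n), Inv ℓ col →
      ∃ q : (V → Fin n) × Matrix (Fin (n * m)) (Fin (n * m + s)) ℝ,
        Inv (ℓ + 1) q.1 ∧
        ∀ v : V,
          (fun i => Fts n m i (q.1 v)) = fun i =>
            sgn ((q.2).mulVec
                (Fin.append (fun i' => Fts n m i' (col v))
                  (∑ ei ∈ H.incid v,
                    (YF ei.1.1).mulVec fun k =>
                      sgn ((WrF ei.1.1).mulVec
                          (fun idx =>
                            ∏ j ∈ Finset.univ.filter (fun j => j ≠ ei.2),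
                              (Fts n m idx (col (ei.1.2 j)) + pvec m (j : ℕ) (idx : ℕ))) k
                        - 1))) i - 1) := by
    intro ℓ col hinv
    -- the product vector is the message vector
    have hQ : ∀ ei : Σ e : Σ r : R, Fin (ar r) → V, Fin (ar e.1),
        (fun idx : Fin (n * m) => ∏ j ∈ Finset.univ.filter (fun j => j ≠ ei.2),
          (Fts n m idx (col (ei.1.2 j)) + pvec m (j : ℕ) (idx : ℕ)))
        = xx n m (ar ei.1.1) (msgF col ei) := by
      intro ei
      funext idx
      rw [xx]
      apply Finset.prod_congr rfl
      intro j hj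
      have hjne : j ≠ ei.2 := (Finset.mem_filter.mp hj).2
      have hupd : (msgF col ei).1.2 j = col (ei.1.2 j) := by
        show Function.update (fun j => col (ei.1.2 j)) ei.2 z0 j = col (ei.1.2 j)
        rw [Function.update_of_ne hjne]
      rw [hupd]
    -- each summand is a one-hot vector
    have hsummand : ∀ (v : V) (ei : Σ e : Σ r : R, Fin (ar r) → V, Fin (ar e.1)),
        ei ∈ H.incid v →
        ((YF ei.1.1).mulVec fun k =>
          sgn ((WrF ei.1.1).mulVec
              (fun idx : Fin (n * m) => ∏ j ∈ Finset.univ.filter (fun j => j ≠ ei.2),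
                (Fts n m idx (col (ei.1.2 j)) + pvec m (j : ℕ) (idx : ℕ))) k - 1))
          = uvec ei.1.1 (msgF col ei) := by
      intro v ei hei
      have hedge : ei.1 ∈ H.edges := (Finset.mem_sigma.mp (Finset.mem_filter.mp hei).1).1
      rw [hQ ei]
      exact hIn ei.1.1 (harity _ hedge) (msgF col ei)
    set zf : V → Fin s → ℝ :=
      fun v => ∑ ei ∈ H.incid v, uvec ei.1.1 (msgF col ei) with hzf
    have hzeq : ∀ v : V,
        (∑ ei ∈ H.incid v,
          (YF ei.1.1).mulVec fun k =>
            sgn ((WrF ei.1.1).mulVec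
                (fun idx : Fin (n * m) => ∏ j ∈ Finset.univ.filter (fun j => j ≠ ei.2),
                  (Fts n m idx (col (ei.1.2 j)) + pvec m (j : ℕ) (idx : ℕ))) k - 1))
          = zf v := by
      intro v
      rw [hzf]
      exact Finset.sum_congr rfl (fun ei hei => hsummand v ei hei)
    -- counting characterization of the aggregated vector
    have hzb : ∀ (v : V) (b : Fin s),
        zf v b = (((H.incid v).val.map (glob col)).count b : ℝ) := by
      intro v b
      show (∑ ei ∈ H.incid v, uvec ei.1.1 (msgF col ei)) b
        = (((H.incid v).val.map (glob col)).count b : ℝ)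
      rw [Finset.sum_apply]
      have h1 : ∀ ei ∈ H.incid v, uvec ei.1.1 (msgF col ei) b
          = if b = glob col ei then (1 : ℝ) else 0 := fun ei _ => rfl
      rw [Finset.sum_congr rfl h1, Finset.sum_boole]
      rw [Multiset.count_map]
      rfl
    have hcount : ∀ u v : V, zf u = zf v ↔
        (H.incid u).val.map (glob col) = (H.incid v).val.map (glob col) := by
      intro u v
      constructor
      · intro h
        apply Multiset.ext.mpr
        intro b
        have := congrFun h b
        rw [hzb, hzb] at this
        exact_mod_cast this
      · intro h
        funext b
        rw [hzb, hzb, h]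
    -- the set-equality characterization
    have setiff : ∀ (r : R) (ef ef' : Fin (ar r) → V) (i i' : Fin (ar r)),
        ({p : WLC D R ℓ × ℕ | ∃ j : Fin (ar r), j ≠ i ∧ p = (H.hrwl c ℓ (ef j), (j : ℕ))}
          = {p : WLC D R ℓ × ℕ | ∃ j : Fin (ar r), j ≠ i' ∧ p = (H.hrwl c ℓ (ef' j), (j : ℕ))})
        ↔ (i = i' ∧ ∀ j : Fin (ar r), j ≠ i → col (ef j) = col (ef' j)) := by
      intro r ef ef' i i'
      constructor
      · intro hset
        have hii : i = i' := by
          by_contra hne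
          have hmem : ((H.hrwl c ℓ (ef' i), (i : ℕ)) : WLC D R ℓ × ℕ)
              ∈ {p : WLC D R ℓ × ℕ | ∃ j : Fin (ar r), j ≠ i' ∧ p = (H.hrwl c ℓ (ef' j), (j : ℕ))} :=
            ⟨i, hne, rfl⟩
          rw [← hset] at hmem
          obtain ⟨j, hjne, hp⟩ := hmem
          have h2 : (i : ℕ) = (j : ℕ) := congrArg Prod.snd hp
          exact hjne (Fin.ext h2.symm)
        refine ⟨hii, ?_⟩
        intro j hj
        have hmem : ((H.hrwl c ℓ (ef j), (j : ℕ)) : WLC D R ℓ × ℕ)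
            ∈ {p : WLC D R ℓ × ℕ | ∃ j : Fin (ar r), j ≠ i ∧ p = (H.hrwl c ℓ (ef j), (j : ℕ))} :=
          ⟨j, hj, rfl⟩
        rw [hset] at hmem
        obtain ⟨j', hj'ne, hp⟩ := hmem
        have h2 : (j : ℕ) = (j' : ℕ) := congrArg Prod.snd hp
        have hjj : j' = j := Fin.ext h2.symm
        have h1 : H.hrwl c ℓ (ef j) = H.hrwl c ℓ (ef' j') := congrArg Prod.fst hp
        rw [hjj] at h1
        exact (hinv _ _).mpr h1
      · rintro ⟨rfl, hcols⟩
        ext p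
        simp only [Set.mem_setOf_eq]
        constructor
        · rintro ⟨j, hjne, rfl⟩
          exact ⟨j, hjne, by rw [(hinv _ _).mp (hcols j hjne)]⟩
        · rintro ⟨j, hjne, rfl⟩
          refine ⟨j, hjne, ?_⟩
          rw [(hinv _ _).mp (hcols j hjne)]
    -- kernel equality between glob and the WL message
    have hker : ∀ ei ei' : Σ e : Σ r : R, Fin (ar r) → V, Fin (ar e.1),
        glob col ei = glob col ei' ↔
        ((({p : WLC D R ℓ × ℕ | ∃ j : Fin (ar ei.1.1), j ≠ ei.2 ∧
              p = (H.hrwl c ℓ (ei.1.2 j), (j : ℕ))}, ei.1.1) : Set (WLC D R ℓ × ℕ) × R)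
          = ({p : WLC D R ℓ × ℕ | ∃ j : Fin (ar ei'.1.1), j ≠ ei'.2 ∧
              p = (H.hrwl c ℓ (ei'.1.2 j), (j : ℕ))}, ei'.1.1)) := by
      rintro ⟨⟨r, ef⟩, i⟩ ⟨⟨r', ef'⟩, i'⟩
      constructor
      · intro h
        have hsig : (⟨r, msgF col ⟨⟨r, ef⟩, i⟩⟩ : Σ r : R, TT n (ar r))
            = ⟨r', msgF col ⟨⟨r', ef'⟩, i'⟩⟩ := Eqv.injective h
        obtain ⟨hr, hμ⟩ := Sigma.mk.inj_iff.mp hsig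
        subst hr
        have hμ' : msgF col ⟨⟨r, ef⟩, i⟩ = msgF col ⟨⟨r, ef'⟩, i'⟩ := eq_of_heq hμ
        have hii : i = i' := congrArg (fun t => t.1.1) hμ'
        have hcols : ∀ j : Fin (ar r), j ≠ i → col (ef j) = col (ef' j) := by
          intro j hj
          have h1 : (msgF col ⟨⟨r, ef⟩, i⟩).1.2 j = (msgF col ⟨⟨r, ef'⟩, i'⟩).1.2 j := by
            rw [hμ']
          have h2 : (msgF col ⟨⟨r, ef⟩, i⟩).1.2 j = col (ef j) := by
            show Function.update (fun j => col (ef j)) i z0 j = col (ef j)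
            rw [Function.update_of_ne hj]
          have h3 : (msgF col ⟨⟨r, ef'⟩, i'⟩).1.2 j = col (ef' j) := by
            show Function.update (fun j => col (ef' j)) i' z0 j = col (ef' j)
            rw [Function.update_of_ne (hii ▸ hj)]
          rw [← h2, h1, h3]
        have hsets := (setiff r ef ef' i i').mpr ⟨hii, hcols⟩
        exact Prod.ext hsets rfl
      · intro h
        have hr : r = r' := congrArg Prod.snd h
        subst hr
        have hsets := congrArg Prod.fst h
        obtain ⟨hii, hcols⟩ := (setiff r ef ef' i i').mp hsets
        have hμeq : msgF col ⟨⟨r, ef⟩, i⟩ = msgF col ⟨⟨r, ef'⟩, i'⟩ := by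
          apply Subtype.ext
          apply Prod.ext hii
          show Function.update (fun j => col (ef j)) i z0
            = Function.update (fun j => col (ef' j)) i' z0
          funext j
          by_cases hji : j = i
          · rw [hji, Function.update_self, ← hii, Function.update_self]
          · have hji' : j ≠ i' := by rw [← hii]; exact hji
            rw [Function.update_of_ne hji, Function.update_of_ne hji', hcols j hji]
        show Eqv ⟨r, msgF col ⟨⟨r, ef⟩, i⟩⟩ = Eqv ⟨r, msgF col ⟨⟨r, ef'⟩, i'⟩⟩
        rw [hμeq]
      -- end hker
    -- the combined feature vector
    set xhat : V → Fin (n * m + s) → ℝ :=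
      fun v => Fin.append (fun i => Fts n m i (col v)) (zf v) with hxhat
    have hbias : ∀ v, xhat v (Fin.castAdd s ⟨0, hnm0⟩) = -1 := by
      intro v
      show Fin.append (fun i => Fts n m i (col v)) (zf v) (Fin.castAdd s ⟨0, hnm0⟩) = -1
      rw [Fin.append_left]
      exact Fts_lo hm1 _ hm1 _
    haveI hne1 : Nonempty (Fin s) := ⟨⟨0, Fintype.card_pos⟩⟩
    haveI hne2 : Nonempty (Set (WLC D R ℓ × ℕ) × R) := ⟨(∅, e₀.1)⟩
    have hxiff : ∀ u v : V, xhat u = xhat v ↔ H.hrwl c (ℓ + 1) u = H.hrwl c (ℓ + 1) v := by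
      intro u v
      rw [hrwl_succ_iff]
      constructor
      · intro h
        have h1 : (fun i => Fts n m i (col u)) = (fun i => Fts n m i (col v)) := by
          funext i
          have h3 : Fin.append (fun i => Fts n m i (col u)) (zf u) (Fin.castAdd s i)
              = Fin.append (fun i => Fts n m i (col v)) (zf v) (Fin.castAdd s i) :=
            congrFun h (Fin.castAdd s i)
          rwa [Fin.append_left, Fin.append_left] at h3
        have h2 : zf u = zf v := by
          funext b
          have h3 : Fin.append (fun i => Fts n m i (col u)) (zf u) (Fin.natAdd (n * m) b)
              = Fin.append (fun i => Fts n m i (col v)) (zf v) (Fin.natAdd (n * m) b) :=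
            congrFun h (Fin.natAdd (n * m) b)
          rwa [Fin.append_right, Fin.append_right] at h3
        refine ⟨(hinv u v).mp (Fts_col_inj hm1 h1), ?_⟩
        exact (map_eq_map_iff (glob col) _ hker _ _).mp ((hcount u v).mp h2)
      · rintro ⟨h1, h2⟩
        have hcoleq : col u = col v := (hinv u v).mpr h1
        have hzeq' : zf u = zf v :=
          (hcount u v).mpr ((map_eq_map_iff (glob col) _ hker _ _).mpr h2)
        show Fin.append (fun i => Fts n m i (col u)) (zf u)
          = Fin.append (fun i => Fts n m i (col v)) (zf v)
        rw [hcoleq, hzeq']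
    obtain ⟨W, cl, hcl, hWeq⟩ := exists_final hm1 (le_of_eq hn) xhat
      (Fin.castAdd s ⟨0, hnm0⟩) hbias
    refine ⟨(cl, W), ?_, ?_⟩
    · intro u v
      exact (hcl u v).trans (hxiff u v)
    · intro v
      have hthis := hWeq v
      show (fun i => Fts n m i (cl v)) = _
      rw [hzeq v]
      exact hthis
  -- assemble the chain of colorings and matrices
  let g : (ℓ : ℕ) → {col : V → Fin n // Inv ℓ col} :=
    fun ℓ => Nat.rec ⟨col₀, hcol₀'⟩
      (fun ℓ ih => ⟨(Classical.choose (STEP ℓ ih.1 ih.2)).1,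
        (Classical.choose_spec (STEP ℓ ih.1 ih.2)).1⟩) ℓ
  refine ⟨fun ℓ v i => Fts n m i ((g ℓ).1 v), fun _ => s,
    fun ℓ => (Classical.choose (STEP ℓ (g ℓ).1 (g ℓ).2)).2,
    fun _ => tF, fun _ => WrF, fun _ => YF,
    fun j idx => pvec m j (idx : ℕ), ?_, ?_, ?_⟩
  · intro ℓ _ u v
    constructor
    · intro hh
      have hh' : (fun i => Fts n m i ((g ℓ).1 u)) = (fun i => Fts n m i ((g ℓ).1 v)) := hh
      exact ((g ℓ).2 u v).mp (Fts_col_inj hm1 hh')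
    · intro hh
      have hcoleq := ((g ℓ).2 u v).mpr hh
      show (fun i => Fts n m i ((g ℓ).1 u)) = fun i => Fts n m i ((g ℓ).1 v)
      rw [hcoleq]
  · intro ℓ _ v
    exact ⟨(g ℓ).1 v, rfl⟩
  · intro ℓ _ v
    exact (Classical.choose_spec (STEP ℓ (g ℓ).1 (g ℓ).2)).2 v
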